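/- Fix n, q_d, q_s and a pattern pair A = (A_t, A_s) with |A_t| = n − q_d and |A_s| = q_s. For integers t ≥ 1 and s ≥ 1, the number of pattern pairs B = (B_t, B_s) whose transmission-part index-discrepancy with A has size at most t, whose substitution symmetric difference with A_s has size at most s and is contained in the transmission discrepancy set, is at most (s+1)(t+1) · C(q_s+s, q_s) · C(t+s, s) · C(q_d+t, q_d) · C(2q_d+t+1, 2q_d+1). -/

import Mathlib

open Finset

namespace Stmt8


noncomputable def gv (a : ℕ → ℕ) (c : ℕ) : ℕ := sInf {i | c ≤ a i}

lemma gv_le {a : ℕ → ℕ} {c i : ℕ} (h : c ≤ a i) : gv a c ≤ i :=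
  Nat.sInf_le (show i ∈ {j | c ≤ a j} from h)

lemma le_a_gv {a : ℕ → ℕ} {c i : ℕ} (h : c ≤ a i) : c ≤ a (gv a c) :=
  Nat.sInf_mem (show {j | c ≤ a j}.Nonempty from ⟨i, h⟩)

def Xc (m : ℕ) (a b : ℕ → ℕ) (c : ℕ) : ℕ :=
  ((Finset.range m).filter (fun i => a i < b i ∧ a i = c)).card

def Yc (m : ℕ) (a b : ℕ → ℕ) (c : ℕ) : ℕ :=
  ((Finset.range m).filter (fun i => b i < a i ∧ a i = c + 1)).card

lemma claimX {m q : ℕ} {a b : ℕ → ℕ} (ha : Monotone a) (hb : Monotone b)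
    (hbq : ∀ i, b i ≤ q) (ham : q ≤ a m) (c : ℕ) :
    (Finset.range m).filter (fun i => a i < b i ∧ a i = c)
      = Finset.Ico (gv a (c + 1) - Xc m a b c) (gv a (c + 1)) := by
  classical
  set S := (Finset.range m).filter (fun i => a i < b i ∧ a i = c) with hS
  rcases S.eq_empty_or_nonempty with h | h
  · have hx : Xc m a b c = 0 := by
      simp only [Xc]; rw [← hS, h, Finset.card_empty]
    rw [h, hx, Nat.sub_zero, Finset.Ico_self]
  · have hmem := S.min'_mem h
    set i₀ := S.min' h with hi₀
    have hmem' := hmem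
    simp only [hS, mem_filter, mem_range] at hmem'
    obtain ⟨hi₀m, hab, hac⟩ := hmem'
    have hcam : c + 1 ≤ a m := by have := hbq i₀; omega
    have hne : c + 1 ≤ a (gv a (c + 1)) := le_a_gv hcam
    have hgm : gv a (c + 1) ≤ m := gv_le hcam
    have h1 : S ⊆ Finset.Ico i₀ (gv a (c + 1)) := by
      intro j hj
      have hj' := hj
      simp only [hS, mem_filter, mem_range] at hj'
      obtain ⟨hjm, hj1, hj2⟩ := hj'
      refine Finset.mem_Ico.2 ⟨Finset.min'_le _ _ hj, ?_⟩
      by_contra hcon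
      push_neg at hcon
      have : c + 1 ≤ a j := le_trans hne (ha hcon)
      omega
    have h2 : Finset.Ico i₀ (gv a (c + 1)) ⊆ S := by
      intro j hj
      rw [Finset.mem_Ico] at hj
      obtain ⟨hj1, hj2⟩ := hj
      have haj1 : a i₀ ≤ a j := ha hj1
      have haj2 : ¬ c + 1 ≤ a j := fun hc => absurd (gv_le hc) (by omega)
      have hbj : b i₀ ≤ b j := hb hj1
      have hjm : j < m := lt_of_lt_of_le hj2 hgm
      simp only [hS, mem_filter, mem_range]
      exact ⟨hjm, by omega, by omega⟩
    have hSeq : S = Finset.Ico i₀ (gv a (c + 1)) := Finset.Subset.antisymm h1 h2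
    have hi₀lt : i₀ < gv a (c + 1) := by
      have := h1 hmem
      rw [Finset.mem_Ico] at this
      exact this.2
    have hcard : Xc m a b c = gv a (c + 1) - i₀ := by
      simp only [Xc]; rw [← hS, hSeq, Nat.card_Ico]
    rw [hSeq, hcard]
    congr 1
    omega

lemma claimY {m : ℕ} {a b : ℕ → ℕ} (ha : Monotone a) (hb : Monotone b)
    (c : ℕ) :
    (Finset.range m).filter (fun i => b i < a i ∧ a i = c + 1)
      = Finset.Ico (gv a (c + 1)) (gv a (c + 1) + Yc m a b c) := by
  classical
  set T := (Finset.range m).filter (fun i => b i < a i ∧ a i = c + 1) with hT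
  rcases T.eq_empty_or_nonempty with h | h
  · have hy : Yc m a b c = 0 := by
      simp only [Yc]; rw [← hT, h, Finset.card_empty]
    rw [h, hy]
    simp
  · have hmem := T.max'_mem h
    set i₁ := T.max' h with hi₁
    have hmem' := hmem
    simp only [hT, mem_filter, mem_range] at hmem'
    obtain ⟨hi₁m, hba, hac⟩ := hmem'
    have hne : c + 1 ≤ a (gv a (c + 1)) := le_a_gv (i := i₁) (by omega)
    have h1 : T ⊆ Finset.Ico (gv a (c + 1)) (i₁ + 1) := by
      intro j hj
      have hj' := hj
      simp only [hT, mem_filter, mem_range] at hj'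
      obtain ⟨hjm, hj1, hj2⟩ := hj'
      exact Finset.mem_Ico.2 ⟨gv_le (i := j) (by omega), Nat.lt_succ_of_le (Finset.le_max' _ _ hj)⟩
    have h2 : Finset.Ico (gv a (c + 1)) (i₁ + 1) ⊆ T := by
      intro j hj
      rw [Finset.mem_Ico] at hj
      obtain ⟨hj1, hj2⟩ := hj
      have haj1 : c + 1 ≤ a j := le_trans hne (ha hj1)
      have haj2 : a j ≤ a i₁ := ha (by omega)
      have hbj : b j ≤ b i₁ := hb (by omega)
      simp only [hT, mem_filter, mem_range]
      exact ⟨by omega, by omega, by omega⟩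
    have hTeq : T = Finset.Ico (gv a (c + 1)) (i₁ + 1) := Finset.Subset.antisymm h1 h2
    have hg1 : gv a (c + 1) ≤ i₁ := by
      have := h1 hmem
      rw [Finset.mem_Ico] at this
      omega
    have hcard : Yc m a b c = i₁ + 1 - gv a (c + 1) := by
      simp only [Yc]; rw [← hT, hTeq, Nat.card_Ico]
    rw [hTeq, hcard]
    congr 1
    omega

lemma coverage {m q : ℕ} {a b : ℕ → ℕ} (ha : Monotone a) (hb : Monotone b)
    (haq : ∀ i, a i ≤ q) (hbq : ∀ i, b i ≤ q) (ham : q ≤ a m) {i : ℕ} (him : i < m) :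
    a i ≠ b i ↔ ∃ c < q, gv a (c + 1) - Xc m a b c ≤ i ∧ i < gv a (c + 1) + Yc m a b c := by
  constructor
  · intro hne
    rcases Nat.lt_or_ge (a i) (b i) with hlt | hge
    · refine ⟨a i, by have := hbq i; omega, ?_⟩
      have hiS : i ∈ (Finset.range m).filter (fun j => a j < b j ∧ a j = a i) :=
        Finset.mem_filter.2 ⟨Finset.mem_range.2 him, hlt, rfl⟩
      rw [claimX ha hb hbq ham (a i), Finset.mem_Ico] at hiS
      exact ⟨hiS.1, by omega⟩
    · have hgt : b i < a i := by omega
      have ha1 : 1 ≤ a i := by omega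
      refine ⟨a i - 1, by have := haq i; omega, ?_⟩
      have hiT : i ∈ (Finset.range m).filter (fun j => b j < a j ∧ a j = (a i - 1) + 1) :=
        Finset.mem_filter.2 ⟨Finset.mem_range.2 him, hgt, by omega⟩
      rw [claimY ha hb (a i - 1), Finset.mem_Ico] at hiT
      exact ⟨by omega, hiT.2⟩
  · rintro ⟨c, hcq, h1, h2⟩
    rcases Nat.lt_or_ge i (gv a (c + 1)) with hlt | hge
    · have hiS : i ∈ Finset.Ico (gv a (c + 1) - Xc m a b c) (gv a (c + 1)) :=
        Finset.mem_Ico.2 ⟨h1, hlt⟩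
      rw [← claimX ha hb hbq ham c] at hiS
      simp only [mem_filter, mem_range] at hiS
      omega
    · have hiT : i ∈ Finset.Ico (gv a (c + 1)) (gv a (c + 1) + Yc m a b c) :=
        Finset.mem_Ico.2 ⟨hge, h2⟩
      rw [← claimY ha hb c] at hiT
      simp only [mem_filter, mem_range] at hiT
      omega

lemma sum_XY {m q : ℕ} {a b : ℕ → ℕ}
    (haq : ∀ i, a i ≤ q) (hbq : ∀ i, b i ≤ q) :
    ∑ c ∈ Finset.range q, (Xc m a b c + Yc m a b c)
      ≤ ((Finset.range m).filter (fun i => a i ≠ b i)).card := by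
  classical
  set D := (Finset.range m).filter (fun i => a i ≠ b i) with hD
  set E := (Finset.range m).filter (fun i => a i < b i) with hE
  set F := (Finset.range m).filter (fun i => b i < a i) with hF
  have hEcard : E.card = ∑ c ∈ Finset.range q, Xc m a b c := by
    rw [Finset.card_eq_sum_card_fiberwise (f := fun i => a i) (t := Finset.range q)
      (fun x hx => by simp only [Finset.mem_coe, hE, mem_filter, mem_range] at hx ⊢; have := hbq x; omega)]
    refine Finset.sum_congr rfl fun c _ => ?_
    simp only [hE, Xc, Finset.filter_filter]
  have hFcard : F.card = ∑ c ∈ Finset.range q, Yc m a b c := by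
    rw [Finset.card_eq_sum_card_fiberwise (f := fun i => a i - 1) (t := Finset.range q)
      (fun x hx => by simp only [Finset.mem_coe, hF, mem_filter, mem_range] at hx ⊢; have := haq x; omega)]
    refine Finset.sum_congr rfl fun c _ => ?_
    simp only [hF, Yc, Finset.filter_filter]
    congr 1
    exact Finset.filter_congr (fun i _ => by omega)
  have hdisj : Disjoint E F := by
    rw [Finset.disjoint_left]
    intro i hiE hiF
    simp only [hE, mem_filter] at hiE
    simp only [hF, mem_filter] at hiF
    omega
  have hsub : E ∪ F ⊆ D := by
    intro i hi
    rcases Finset.mem_union.1 hi with h | h <;>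
      simp only [hE, hF, mem_filter, mem_range] at h <;>
      simp only [hD, mem_filter, mem_range] <;> omega
  have hDEF : E.card + F.card ≤ D.card := by
    calc E.card + F.card = (E ∪ F).card := (Finset.card_union_of_disjoint hdisj).symm
      _ ≤ D.card := Finset.card_le_card hsub
  rw [Finset.sum_add_distrib]
  omega




lemma sum_choose_le (d : ℕ) : ∀ s : ℕ, ∑ k ∈ Finset.range (s + 1), d.choose k ≤ (d + s).choose s
  | 0 => by simp
  | s + 1 => by
    rw [Finset.sum_range_succ]
    have h1 := sum_choose_le d s
    have h2 : d.choose (s + 1) ≤ (d + s).choose (s + 1) :=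
      Nat.choose_le_choose _ (by omega)
    have h3 : (d + s + 1).choose (s + 1) = (d + s).choose s + (d + s).choose (s + 1) :=
      Nat.choose_succ_succ' (d + s) s
    have h4 : d + (s + 1) = d + s + 1 := rfl
    rw [h4, h3]
    omega

lemma card_small_subsets {α : Type*} [DecidableEq α] (D : Finset α) (s : ℕ) :
    (D.powerset.filter (fun δ => δ.card ≤ s)).card ≤ (D.card + s).choose s := by
  classical
  have hsub : D.powerset.filter (fun δ => δ.card ≤ s)
      ⊆ (Finset.range (s + 1)).biUnion (fun k => Finset.powersetCard k D) := by
    intro δ hδ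
    simp only [mem_filter, mem_powerset] at hδ
    exact Finset.mem_biUnion.2 ⟨δ.card, Finset.mem_range.2 (by omega),
      Finset.mem_powersetCard.2 ⟨hδ.1, rfl⟩⟩
  calc (D.powerset.filter (fun δ => δ.card ≤ s)).card
      ≤ ((Finset.range (s + 1)).biUnion (fun k => Finset.powersetCard k D)).card :=
        Finset.card_le_card hsub
    _ ≤ ∑ k ∈ Finset.range (s + 1), (Finset.powersetCard k D).card := Finset.card_biUnion_le
    _ = ∑ k ∈ Finset.range (s + 1), D.card.choose k := by
        refine Finset.sum_congr rfl fun k _ => ?_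
        rw [Finset.card_powersetCard]
    _ ≤ (D.card + s).choose s := sum_choose_le D.card s

def zf {K T : ℕ} (f : Fin K → Fin T) (c : ℕ) : ℕ := if h : c < K then (f ⟨c, h⟩).val else 0

def Hf {K T : ℕ} (f : Fin K → Fin T) (j : ℕ) : ℕ := (∑ c ∈ Finset.range (j + 1), zf f c) + j

lemma Hf_lt {K T : ℕ} (f : Fin K → Fin T) {u v : ℕ} (h : u < v) : Hf f u < Hf f v := by
  unfold Hf
  have : ∑ c ∈ Finset.range (u + 1), zf f c ≤ ∑ c ∈ Finset.range (v + 1), zf f c :=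
    Finset.sum_le_sum_of_subset (Finset.range_subset_range.2 (by omega))
  omega

lemma zf_sum {K T : ℕ} (f : Fin K → Fin T) :
    ∑ c ∈ Finset.range K, zf f c = ∑ c : Fin K, (f c).val := by
  rw [← Fin.sum_univ_eq_sum_range]
  refine Finset.sum_congr rfl fun c _ => ?_
  simp [zf, c.isLt]

lemma Hf_le {K T S : ℕ} (f : Fin K → Fin T) (hsum : ∑ c : Fin K, (f c).val ≤ S)
    {j : ℕ} (hj : j < K) : Hf f j ≤ S + j := by
  unfold Hf
  have h1 : ∑ c ∈ Finset.range (j + 1), zf f c ≤ ∑ c ∈ Finset.range K, zf f c :=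
    Finset.sum_le_sum_of_subset (Finset.range_subset_range.2 (by omega))
  rw [zf_sum] at h1
  omega

lemma Hf_inj {K T : ℕ} (f g : Fin K → Fin T) (h : ∀ j < K, Hf f j = Hf g j) : f = g := by
  have hz : ∀ c, c < K → zf f c = zf g c := by
    intro c hc
    match c with
    | 0 =>
      have h0 := h 0 hc
      unfold Hf at h0
      simp only [Finset.sum_range_succ, Finset.sum_range_zero] at h0
      omega
    | c + 1 =>
      have h1 := h (c + 1) hc
      have h2 := h c (by omega)
      unfold Hf at h1 h2
      simp only [Finset.sum_range_succ] at h1 h2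
      omega
  funext j
  have := hz j.val j.isLt
  simp only [zf, j.isLt, dif_pos, Fin.eta] at this
  exact Fin.val_injective this

lemma card_sum_le (K S : ℕ) (hS : 1 ≤ S) (T : ℕ) :
    ((Finset.univ : Finset (Fin K → Fin T)).filter
        (fun f => ∑ c : Fin K, (f c).val ≤ S)).card ≤ (S + K).choose K := by
  classical
  have hSK : 0 < S + K := by omega
  have hkey : ∀ f : Fin K → Fin T, (∑ c : Fin K, (f c).val ≤ S) →
      ∀ j : Fin K, min (Hf f j.val) (S + K - 1) = Hf f j.val := by
    intro f hf j
    have := Hf_le f hf j.isLt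
    have := j.isLt
    omega
  set ψ : (Fin K → Fin T) → Fin K → Fin (S + K) :=
    fun f j => (⟨min (Hf f j.val) (S + K - 1), by omega⟩ : Fin (S + K)) with hψ
  have hmono : ∀ f : Fin K → Fin T, (∑ c : Fin K, (f c).val ≤ S) → StrictMono (ψ f) := by
    intro f hf j j' hlt
    have h1 := hkey f hf j
    have h2 := hkey f hf j'
    simp only [hψ, Fin.lt_def, h1, h2]
    exact Hf_lt f hlt
  calc ((Finset.univ : Finset (Fin K → Fin T)).filter
        (fun f => ∑ c : Fin K, (f c).val ≤ S)).card
      ≤ (Finset.powersetCard K (Finset.univ : Finset (Fin (S + K)))).card := by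
        refine Finset.card_le_card_of_injOn (fun f => Finset.univ.image (ψ f)) ?_ ?_
        · intro f hf
          simp only [Finset.mem_coe, mem_filter] at hf
          refine Finset.mem_powersetCard.2 ⟨Finset.subset_univ _, ?_⟩
          rw [Finset.card_image_of_injective _ (hmono f hf.2).injective, Finset.card_univ,
            Fintype.card_fin]
        · intro f hf g hg heq
          simp only [Finset.coe_filter, Set.mem_setOf_eq] at hf hg
          have hcf : (Finset.univ.image (ψ f)).card = K := by
            rw [Finset.card_image_of_injective _ (hmono f hf.2).injective, Finset.card_univ,
              Fintype.card_fin]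
          have hcg : (Finset.univ.image (ψ g)).card = K := by
            rw [Finset.card_image_of_injective _ (hmono g hg.2).injective, Finset.card_univ,
              Fintype.card_fin]
          have himg : Finset.univ.image (ψ f) = Finset.univ.image (ψ g) := heq
          have huf : ψ f = (Finset.univ.image (ψ f)).orderEmbOfFin hcf :=
            Finset.orderEmbOfFin_unique hcf (fun x => Finset.mem_image_of_mem _ (Finset.mem_univ x))
              (hmono f hf.2)
          have hug : ψ g = (Finset.univ.image (ψ f)).orderEmbOfFin hcf :=
            Finset.orderEmbOfFin_unique hcf
              (fun x => himg ▸ Finset.mem_image_of_mem _ (Finset.mem_univ x))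
              (hmono g hg.2)
          have hψeq : ψ f = ψ g := huf.trans hug.symm
          refine Hf_inj f g ?_
          intro j hj
          have := congrFun hψeq ⟨j, hj⟩
          simp only [hψ] at this
          have h1 := hkey f hf.2 ⟨j, hj⟩
          have h2 := hkey g hg.2 ⟨j, hj⟩
          have := congrArg Fin.val this
          simp only at this
          simp only [h1, h2] at this
          exact this
    _ = (S + K).choose K := by
        rw [Finset.card_powersetCard, Finset.card_univ, Fintype.card_fin]

lemma smono_add_le {m n : ℕ} {f : Fin m → Fin n} (hf : StrictMono f) :
    ∀ (d : ℕ) (i j : Fin m), i.val + d = j.val → (f i).val + d ≤ (f j).val := by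
  intro d
  induction d with
  | zero =>
    intro i j h
    have : i = j := Fin.ext (by omega)
    subst this
    omega
  | succ d ih =>
    intro i j h
    have hj0 : 0 < j.val := by omega
    have hjm : j.val - 1 < m := by omega
    have h1 : i.val + d = (⟨j.val - 1, hjm⟩ : Fin m).val := by simp; omega
    have h2 := ih i ⟨j.val - 1, hjm⟩ h1
    have h3 : (⟨j.val - 1, hjm⟩ : Fin m) < j := by simp [Fin.lt_def]; omega
    have h4 : (f ⟨j.val - 1, hjm⟩).val < (f j).val := hf h3
    omega

lemma smono_le_val {m n : ℕ} {f : Fin m → Fin n} (hf : StrictMono f) (i : Fin m) :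
    i.val ≤ (f i).val := by
  have hm : 0 < m := i.pos
  have := smono_add_le hf i.val ⟨0, hm⟩ i (by simp)
  omega

lemma smono_diff_le {m n : ℕ} {f : Fin m → Fin n} (hf : StrictMono f) (i : Fin m) :
    (f i).val - i.val ≤ n - m := by
  have hm : 0 < m := i.pos
  have hlast : m - 1 < m := by omega
  have h1 := smono_add_le hf (m - 1 - i.val) i ⟨m - 1, hlast⟩ (by simp; omega)
  have h2 : (f ⟨m - 1, hlast⟩).val < n := (f _).isLt
  have h3 := i.isLt
  omega

def dfN {n : ℕ} (m q : ℕ) (f : Fin m → Fin n) (i : ℕ) : ℕ :=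
  if h : i < m then (f ⟨i, h⟩).val - i else q

lemma dfN_mono {n m q : ℕ} {f : Fin m → Fin n} (hf : StrictMono f) (hq : n ≤ m + q) :
    Monotone (dfN m q f) := by
  intro u v huv
  unfold dfN
  split <;> split
  · next hu hv =>
    have h1 := smono_add_le hf (v - u) ⟨u, hu⟩ ⟨v, hv⟩ (by simp; omega)
    have h2 := smono_le_val hf ⟨u, hu⟩
    simp only at h1 h2 ⊢
    omega
  · next hu hv =>
    have h1 := smono_diff_le hf ⟨u, hu⟩
    simp only at h1 ⊢
    omega
  · next hu hv => omega
  · exact le_refl _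

lemma dfN_le {n m q : ℕ} {f : Fin m → Fin n} (hf : StrictMono f) (hq : n ≤ m + q) (i : ℕ) :
    dfN m q f i ≤ q := by
  unfold dfN
  split
  · next h =>
    have := smono_diff_le hf ⟨i, h⟩
    simp only at this
    omega
  · exact le_refl _

lemma dfN_top {n m q : ℕ} (f : Fin m → Fin n) {i : ℕ} (h : m ≤ i) : dfN m q f i = q :=
  dif_neg (by omega)

lemma dfN_ne {n m q : ℕ} {f g : Fin m → Fin n} (hf : StrictMono f) (hg : StrictMono g)
    (i : Fin m) : f i ≠ g i ↔ dfN m q f i.val ≠ dfN m q g i.val := by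
  have h1 := smono_le_val hf i
  have h2 := smono_le_val hg i
  simp only [dfN, i.isLt, dif_pos, Fin.eta]
  rw [ne_eq, Fin.ext_iff]
  omega


lemma card_filter_fin (m : ℕ) (p : Fin m → Prop) [DecidablePred p] (pN : ℕ → Prop)
    [DecidablePred pN] (h : ∀ i : Fin m, p i ↔ pN i.val) :
    (Finset.univ.filter p).card = ((Finset.range m).filter pN).card := by
  classical
  rw [← Finset.card_image_of_injective (Finset.univ.filter p) Fin.val_injective]
  congr 1
  ext x
  simp only [Finset.mem_image, mem_filter, mem_univ, true_and, mem_range]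
  constructor
  · rintro ⟨i, hi, rfl⟩
    exact ⟨i.isLt, (h i).1 hi⟩
  · rintro ⟨hx, hpx⟩
    exact ⟨⟨x, hx⟩, (h ⟨x, hx⟩).2 hpx, rfl⟩

end Stmt8

open Stmt8 in
theorem stmt_8_aux {n m q_d q_s : ℕ} (hnm : n ≤ m + q_d) (hmn : m ≤ n) (t s : ℕ)
    (ht : 1 ≤ t) (hs : 1 ≤ s)
    (At : Fin m → Fin n) (hAt : StrictMono At)
    (As : Finset (Fin m)) (hAs : As.card = q_s) :
    Nat.card {B : (Fin m → Fin n) × Finset (Fin m) //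
        StrictMono B.1 ∧ B.2.card = q_s ∧
        (Finset.univ.filter (fun i => At i ≠ B.1 i)).card ≤ t ∧
        symmDiff As B.2 ⊆ Finset.univ.filter (fun i => At i ≠ B.1 i) ∧
        (symmDiff As B.2).card ≤ s}
      ≤ (s + 1) * (t + 1) * Nat.choose (q_s + s) q_s * Nat.choose (t + s) s *
          Nat.choose (q_d + t) q_d * Nat.choose (2 * q_d + t + 1) (2 * q_d + 1) := by
  classical
  set aA : ℕ → ℕ := dfN m q_d At with haA
  have haAmono : Monotone aA := dfN_mono hAt hnm
  have haAle : ∀ i, aA i ≤ q_d := dfN_le hAt hnm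
  have haAm : q_d ≤ aA m := le_of_eq (dfN_top At (le_refl m)).symm
  -- decode
  set dec : (Fin (2 * q_d) → Fin (t + 1)) → Finset (Fin m) := fun w =>
    Finset.univ.filter (fun i : Fin m => ∃ c < q_d,
      gv aA (c + 1) - zf w c ≤ i.val ∧ i.val < gv aA (c + 1) + zf w (q_d + c)) with hdec
  set Us : (Fin (2 * q_d) → Fin (t + 1)) → Finset (Fin n) := fun w =>
    ((dec w)ᶜ.image At)ᶜ with hUs
  set 𝒯 : Finset ((Fin (2 * q_d) → Fin (t + 1)) × Finset (Fin n) × Finset (Fin m)) :=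
    Finset.univ.filter (fun w =>
      (∑ j : Fin (2 * q_d), (w.1 j).val ≤ t) ∧ w.2.1 ⊆ Us w.1 ∧
      w.2.1.card = (dec w.1).card ∧ w.2.2 ⊆ dec w.1 ∧ w.2.2.card ≤ s) with hT
  -- the encoding map
  set DF : ((Fin m → Fin n) × Finset (Fin m)) → Finset (Fin m) := fun B =>
    Finset.univ.filter (fun i => At i ≠ B.1 i) with hDF
  set w1 : ((Fin m → Fin n) × Finset (Fin m)) → (Fin (2 * q_d) → Fin (t + 1)) := fun B j =>
    ⟨min (if j.val < q_d then Xc m aA (dfN m q_d B.1) j.val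
          else Yc m aA (dfN m q_d B.1) (j.val - q_d)) t, by omega⟩ with hw1
  -- per-element facts
  have main : ∀ B : (Fin m → Fin n) × Finset (Fin m), StrictMono B.1 → (DF B).card ≤ t →
      (dec (w1 B) = DF B ∧ ∑ j : Fin (2 * q_d), ((w1 B) j).val ≤ t) := by
    intro B hB1 hBt
    set bB : ℕ → ℕ := dfN m q_d B.1 with hbB
    have hbmono : Monotone bB := dfN_mono hB1 hnm
    have hble : ∀ i, bB i ≤ q_d := dfN_le hB1 hnm
    have hcardlink : (DF B).card = ((Finset.range m).filter (fun i => aA i ≠ bB i)).card := by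
      refine card_filter_fin m _ _ ?_
      intro i
      exact dfN_ne (q := q_d) hAt hB1 i
    have hsum := sum_XY (m := m) (q := q_d) (a := aA) (b := bB) haAle hble
    have hsum' : ∑ c ∈ Finset.range q_d, (Xc m aA bB c + Yc m aA bB c) ≤ t := by
      omega
    have hXle : ∀ c, c < q_d → Xc m aA bB c ≤ t ∧ Yc m aA bB c ≤ t := by
      intro c hc
      have h1 : Xc m aA bB c + Yc m aA bB c
          ≤ ∑ c ∈ Finset.range q_d, (Xc m aA bB c + Yc m aA bB c) :=
        Finset.single_le_sum (f := fun c => Xc m aA bB c + Yc m aA bB c)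
          (fun _ _ => Nat.zero_le _) (Finset.mem_range.2 hc)
      omega
    have hzf1 : ∀ c, c < q_d → zf (w1 B) c = Xc m aA bB c := by
      intro c hc
      have hc2 : c < 2 * q_d := by omega
      simp only [zf, hc2, dif_pos, hw1]
      simp only [if_pos hc]
      exact Nat.min_eq_left (hXle c hc).1
    have hzf2 : ∀ c, c < q_d → zf (w1 B) (q_d + c) = Yc m aA bB c := by
      intro c hc
      have hc2 : q_d + c < 2 * q_d := by omega
      have hc3 : ¬ (q_d + c < q_d) := by omega
      simp only [zf, hc2, dif_pos, hw1]
      simp only [if_neg hc3]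
      have : q_d + c - q_d = c := by omega
      rw [this]
      exact Nat.min_eq_left (hXle c hc).2
    constructor
    · -- dec (w1 B) = DF B
      ext i
      simp only [hdec, hDF, mem_filter, mem_univ, true_and]
      have hcov := coverage (m := m) (q := q_d) haAmono hbmono haAle hble haAm i.isLt
      have hne := dfN_ne (q := q_d) hAt hB1 i
      constructor
      · rintro ⟨c, hc, h1, h2⟩
        rw [hzf1 c hc] at h1
        rw [hzf2 c hc] at h2
        exact hne.2 (hcov.2 ⟨c, hc, h1, h2⟩)
      · intro hne'
        obtain ⟨c, hc, h1, h2⟩ := hcov.1 (hne.1 hne')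
        exact ⟨c, hc, by rw [hzf1 c hc]; exact h1, by rw [hzf2 c hc]; exact h2⟩
    · -- sum bound
      have e1 : ∑ j : Fin (2 * q_d), ((w1 B) j).val = ∑ c ∈ Finset.range (2 * q_d), zf (w1 B) c :=
        (zf_sum (w1 B)).symm
      have e2 : ∑ c ∈ Finset.range (2 * q_d), zf (w1 B) c
          = ∑ c ∈ Finset.range (q_d + q_d), zf (w1 B) c :=
        Finset.sum_congr (by rw [Nat.two_mul]) (fun _ _ => rfl)
      have e3 : ∑ c ∈ Finset.range (q_d + q_d), zf (w1 B) c
          = ∑ c ∈ Finset.range q_d, zf (w1 B) c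
            + ∑ c ∈ Finset.range q_d, zf (w1 B) (q_d + c) :=
        Finset.sum_range_add (fun c => zf (w1 B) c) q_d q_d
      have e4 : ∑ c ∈ Finset.range q_d, zf (w1 B) c
            + ∑ c ∈ Finset.range q_d, zf (w1 B) (q_d + c)
          = ∑ c ∈ Finset.range q_d, (Xc m aA bB c + Yc m aA bB c) := by
        rw [Finset.sum_add_distrib]
        congr 1
        · exact Finset.sum_congr rfl fun c hc => hzf1 c (Finset.mem_range.1 hc)
        · exact Finset.sum_congr rfl fun c hc => hzf2 c (Finset.mem_range.1 hc)
      rw [e1, e2, e3, e4]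
      exact hsum'
  -- the injection into 𝒯
  have hinj : ∃ Φ : {B : (Fin m → Fin n) × Finset (Fin m) //
        StrictMono B.1 ∧ B.2.card = q_s ∧ (DF B).card ≤ t ∧
        symmDiff As B.2 ⊆ DF B ∧ (symmDiff As B.2).card ≤ s} → {w // w ∈ 𝒯},
      Function.Injective Φ := by
    refine ⟨fun B => ⟨(w1 B.val, (DF B.val).image B.val.1, symmDiff As B.val.2), ?_⟩, ?_⟩
    · obtain ⟨h1, h2, h3, h4, h5⟩ := B.prop
      obtain ⟨hdecB, hsumB⟩ := main B.val h1 h3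
      simp only [hT, mem_filter, mem_univ, true_and]
      refine ⟨hsumB, ?_, ?_, ?_, ?_⟩
      · simp only [hUs]
        rw [hdecB]
        intro v hv
        simp only [Finset.mem_image] at hv
        obtain ⟨i, hi, rfl⟩ := hv
        rw [Finset.mem_compl]
        intro hcon
        simp only [Finset.mem_image, Finset.mem_compl] at hcon
        obtain ⟨j, hj, hj2⟩ := hcon
        simp only [hDF, mem_filter, mem_univ, true_and, not_ne_iff] at hj
        have : i = j := h1.injective (by rw [← hj2, hj])
        subst this
        simp only [hDF, mem_filter, mem_univ, true_and] at hi
        exact hi hj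
      · rw [hdecB]
        exact Finset.card_image_of_injective _ h1.injective
      · rw [hdecB]; exact h4
      · exact h5
    · intro B B' heq
      have heq' := congrArg Subtype.val heq
      simp only at heq'
      have e1 : w1 B.val = w1 B'.val := congrArg (fun z => z.1) heq'
      have e2 : (DF B.val).image B.val.1 = (DF B'.val).image B'.val.1 :=
        congrArg (fun z => z.2.1) heq'
      have e3 : symmDiff As B.val.2 = symmDiff As B'.val.2 :=
        congrArg (fun z => z.2.2) heq'
      obtain ⟨h1, _, h3, _, _⟩ := B.prop
      obtain ⟨h1', _, h3', _, _⟩ := B'.prop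
      have hdecB := (main B.val h1 h3).1
      have hdecB' := (main B'.val h1' h3').1
      have hDFeq : DF B.val = DF B'.val := by
        rw [← hdecB, ← hdecB', e1]
      -- images over univ are equal
      have him1 : ((DF B.val)ᶜ).image B.val.1 = ((DF B.val)ᶜ).image At := by
        refine Finset.image_congr ?_
        intro x hx
        simp only [Finset.coe_compl, Set.mem_compl_iff, Finset.mem_coe, hDF,
          mem_filter, mem_univ, true_and, not_ne_iff] at hx
        exact hx.symm
      have him2 : ((DF B'.val)ᶜ).image B'.val.1 = ((DF B'.val)ᶜ).image At := by
        refine Finset.image_congr ?_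
        intro x hx
        simp only [Finset.coe_compl, Set.mem_compl_iff, Finset.mem_coe, hDF,
          mem_filter, mem_univ, true_and, not_ne_iff] at hx
        exact hx.symm
      have himg : Finset.univ.image B.val.1 = Finset.univ.image B'.val.1 := by
        have hu : (Finset.univ : Finset (Fin m)) = DF B.val ∪ (DF B.val)ᶜ :=
          (Finset.union_compl _).symm
        have hu' : (Finset.univ : Finset (Fin m)) = DF B'.val ∪ (DF B'.val)ᶜ :=
          (Finset.union_compl _).symm
        calc Finset.univ.image B.val.1
            = (DF B.val ∪ (DF B.val)ᶜ).image B.val.1 := by rw [← hu]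
          _ = (DF B.val).image B.val.1 ∪ ((DF B.val)ᶜ).image B.val.1 := Finset.image_union _ _
          _ = (DF B'.val).image B'.val.1 ∪ ((DF B'.val)ᶜ).image B'.val.1 := by
              rw [him1, him2, e2, hDFeq]
          _ = (DF B'.val ∪ (DF B'.val)ᶜ).image B'.val.1 := (Finset.image_union _ _).symm
          _ = Finset.univ.image B'.val.1 := by rw [← hu']
      have hcardimg : (Finset.univ.image B.val.1).card = m := by
        rw [Finset.card_image_of_injective _ h1.injective, Finset.card_univ, Fintype.card_fin]
      have hf1 : B.val.1 = (Finset.univ.image B.val.1).orderEmbOfFin hcardimg :=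
        Finset.orderEmbOfFin_unique hcardimg
          (fun x => Finset.mem_image_of_mem _ (Finset.mem_univ x)) h1
      have hf2 : B'.val.1 = (Finset.univ.image B.val.1).orderEmbOfFin hcardimg :=
        Finset.orderEmbOfFin_unique hcardimg
          (fun x => himg ▸ Finset.mem_image_of_mem _ (Finset.mem_univ x)) h1'
      have hfeq : B.val.1 = B'.val.1 := hf1.trans hf2.symm
      have hseq : B.val.2 = B'.val.2 := by
        have h := congrArg (fun z => symmDiff As z) e3
        simpa [symmDiff_symmDiff_cancel_left] using h
      exact Subtype.ext (Prod.ext hfeq hseq)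
  -- cardinal chain
  obtain ⟨Φ, hΦ⟩ := hinj
  have step1 : Nat.card {B : (Fin m → Fin n) × Finset (Fin m) //
        StrictMono B.1 ∧ B.2.card = q_s ∧ (DF B).card ≤ t ∧
        symmDiff As B.2 ⊆ DF B ∧ (symmDiff As B.2).card ≤ s} ≤ 𝒯.card := by
    have := Nat.card_le_card_of_injective Φ hΦ
    rwa [Nat.card_eq_finsetCard] at this
  -- counting 𝒯
  set W : Finset (Fin (2 * q_d) → Fin (t + 1)) :=
    Finset.univ.filter (fun w => ∑ j : Fin (2 * q_d), (w j).val ≤ t) with hW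
  have hfiber : ∀ w1' ∈ W, (𝒯.filter (fun w => w.1 = w1')).card
      ≤ (q_d + t).choose q_d * (t + s).choose s := by
    intro w1' hw1'
    simp only [hW, mem_filter, mem_univ, true_and] at hw1'
    set d := (dec w1').card with hd
    -- d ≤ t
    have hdt : d ≤ t := by
      have hsub : dec w1' ⊆ (Finset.range q_d).biUnion (fun c =>
          Finset.univ.filter (fun i : Fin m =>
            gv aA (c + 1) - zf w1' c ≤ i.val ∧ i.val < gv aA (c + 1) + zf w1' (q_d + c))) := by
        intro i hi
        simp only [hdec, mem_filter, mem_univ, true_and] at hi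
        obtain ⟨c, hc, h1, h2⟩ := hi
        exact Finset.mem_biUnion.2 ⟨c, Finset.mem_range.2 hc,
          Finset.mem_filter.2 ⟨Finset.mem_univ _, h1, h2⟩⟩
      have hcard1 : ∀ c, (Finset.univ.filter (fun i : Fin m =>
          gv aA (c + 1) - zf w1' c ≤ i.val ∧ i.val < gv aA (c + 1) + zf w1' (q_d + c))).card
          ≤ zf w1' c + zf w1' (q_d + c) := by
        intro c
        have : (Finset.univ.filter (fun i : Fin m =>
            gv aA (c + 1) - zf w1' c ≤ i.val ∧ i.val < gv aA (c + 1) + zf w1' (q_d + c))).card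
            ≤ (Finset.Ico (gv aA (c + 1) - zf w1' c) (gv aA (c + 1) + zf w1' (q_d + c))).card := by
          refine Finset.card_le_card_of_injOn (fun i => i.val) ?_ ?_
          · intro i hi
            simp only [Finset.mem_coe, mem_filter] at hi
            exact Finset.mem_Ico.2 hi.2
          · intro i _ j _ hij
            exact Fin.val_injective hij
        rw [Nat.card_Ico] at this
        omega
      calc d ≤ ((Finset.range q_d).biUnion _).card := Finset.card_le_card hsub
        _ ≤ ∑ c ∈ Finset.range q_d, (Finset.univ.filter (fun i : Fin m =>
            gv aA (c + 1) - zf w1' c ≤ i.val ∧ i.val < gv aA (c + 1) + zf w1' (q_d + c))).card :=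
          Finset.card_biUnion_le
        _ ≤ ∑ c ∈ Finset.range q_d, (zf w1' c + zf w1' (q_d + c)) :=
          Finset.sum_le_sum fun c _ => hcard1 c
        _ = ∑ c ∈ Finset.range (q_d + q_d), zf w1' c := by
          rw [Finset.sum_add_distrib, ← Finset.sum_range_add (fun c => zf w1' c) q_d q_d]
        _ = ∑ j : Fin (2 * q_d), (w1' j).val := by
          rw [show q_d + q_d = 2 * q_d by omega, zf_sum]
        _ ≤ t := hw1'
    have hdm : d ≤ m := by
      have : dec w1' ⊆ Finset.univ := Finset.subset_univ _
      have := Finset.card_le_card this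
      rwa [Finset.card_univ, Fintype.card_fin] at this
    -- fiber injection into product
    have hfib : (𝒯.filter (fun w => w.1 = w1')).card
        ≤ ((Finset.powersetCard d (Us w1')) ×ˢ
            ((dec w1').powerset.filter (fun δ => δ.card ≤ s))).card := by
      refine Finset.card_le_card_of_injOn (fun w => (w.2.1, w.2.2)) ?_ ?_
      · intro w hw
        simp only [Finset.mem_coe, mem_filter, hT, mem_univ, true_and] at hw
        obtain ⟨⟨hsum, hS1, hS2, hδ1, hδ2⟩, hfst⟩ := hw
        rw [Finset.mem_coe, Finset.mem_product]
        constructor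
        · refine Finset.mem_powersetCard.2 ⟨by rw [← hfst]; exact hS1, ?_⟩
          rw [hS2, hfst, hd]
        · exact Finset.mem_filter.2 ⟨Finset.mem_powerset.2 (by rw [← hfst]; exact hδ1), hδ2⟩
      · intro w hw w' hw' heq
        simp only [Finset.coe_filter, Set.mem_setOf_eq] at hw hw'
        have h1 : w.1 = w'.1 := hw.2.trans hw'.2.symm
        have h2 : w.2.1 = w'.2.1 := congrArg Prod.fst heq
        have h3 : w.2.2 = w'.2.2 := congrArg Prod.snd heq
        exact Prod.ext h1 (Prod.ext h2 h3)
    -- card of the product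
    have hUcard : (Us w1').card = n - (m - d) := by
      rw [hUs]
      simp only
      rw [Finset.card_compl, Finset.card_image_of_injective _ hAt.injective,
        Finset.card_compl, Fintype.card_fin, Fintype.card_fin, ← hd]
    have hprod : ((Finset.powersetCard d (Us w1')) ×ˢ
        ((dec w1').powerset.filter (fun δ => δ.card ≤ s))).card
        ≤ (q_d + t).choose q_d * (t + s).choose s := by
      rw [Finset.card_product, Finset.card_powersetCard, hUcard]
      have hA : (n - (m - d)).choose d ≤ (q_d + t).choose q_d := by
        have h1 : (n - (m - d)).choose d ≤ (q_d + d).choose d :=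
          Nat.choose_le_choose d (by omega)
        have h2 : (q_d + d).choose d = (q_d + d).choose q_d := Nat.choose_symm_add.symm
        have h3 : (q_d + d).choose q_d ≤ (q_d + t).choose q_d :=
          Nat.choose_le_choose q_d (by omega)
        omega
      have hB : ((dec w1').powerset.filter (fun δ => δ.card ≤ s)).card ≤ (t + s).choose s := by
        have h1 := card_small_subsets (dec w1') s
        have h2 : (d + s).choose s ≤ (t + s).choose s := Nat.choose_le_choose s (by omega)
        rw [← hd] at h1
        omega
      exact Nat.mul_le_mul hA hB
    omega
  have hTcard : 𝒯.card ≤ (t + 2 * q_d).choose (2 * q_d) * ((q_d + t).choose q_d * (t + s).choose s) := by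
    have hfw : ∀ w ∈ 𝒯, w.1 ∈ W := by
      intro w hw
      simp only [hT, mem_filter, mem_univ, true_and] at hw
      simp only [hW, mem_filter, mem_univ, true_and]
      exact hw.1
    rw [Finset.card_eq_sum_card_fiberwise hfw]
    calc ∑ w1' ∈ W, (𝒯.filter (fun w => w.1 = w1')).card
        ≤ ∑ w1' ∈ W, (q_d + t).choose q_d * (t + s).choose s :=
          Finset.sum_le_sum hfiber
      _ = W.card * ((q_d + t).choose q_d * (t + s).choose s) := by
          rw [Finset.sum_const, smul_eq_mul]
      _ ≤ (t + 2 * q_d).choose (2 * q_d) * ((q_d + t).choose q_d * (t + s).choose s) := by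
          have := card_sum_le (2 * q_d) t ht (t + 1)
          exact Nat.mul_le_mul_right _ this
  -- final arithmetic
  have hfinal : (t + 2 * q_d).choose (2 * q_d) * ((q_d + t).choose q_d * (t + s).choose s)
      ≤ (s + 1) * (t + 1) * Nat.choose (q_s + s) q_s * Nat.choose (t + s) s *
          Nat.choose (q_d + t) q_d * Nat.choose (2 * q_d + t + 1) (2 * q_d + 1) := by
    have hp : (t + 2 * q_d).choose (2 * q_d) ≤ (2 * q_d + t + 1).choose (2 * q_d + 1) := by
      have := Nat.choose_succ_succ' (2 * q_d + t) (2 * q_d)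
      have he : t + 2 * q_d = 2 * q_d + t := by omega
      rw [he]
      omega
    have hq : 1 ≤ (q_s + s).choose q_s := Nat.choose_pos (by omega)
    calc (t + 2 * q_d).choose (2 * q_d) * ((q_d + t).choose q_d * (t + s).choose s)
        ≤ (2 * q_d + t + 1).choose (2 * q_d + 1) * ((q_d + t).choose q_d * (t + s).choose s) :=
          Nat.mul_le_mul_right _ hp
      _ ≤ ((s + 1) * (t + 1) * (q_s + s).choose q_s) *
            ((2 * q_d + t + 1).choose (2 * q_d + 1) * ((q_d + t).choose q_d * (t + s).choose s)) := by
          refine Nat.le_mul_of_pos_left _ ?_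
          have : 0 < (s + 1) * (t + 1) := by positivity
          exact Nat.mul_pos this hq
      _ = (s + 1) * (t + 1) * Nat.choose (q_s + s) q_s * Nat.choose (t + s) s *
          Nat.choose (q_d + t) q_d * Nat.choose (2 * q_d + t + 1) (2 * q_d + 1) := by ring
  calc Nat.card _ ≤ 𝒯.card := step1
    _ ≤ _ := le_trans hTcard hfinal




/-- Lemma 2: the number of pattern pairs `B = (B_t, B_s)` whose transmission
discrepancy with `A_t` has size at most `t` and whose substitution symmetric
difference with `A_s` is contained in the discrepancy set and has size at most `s`
is at most `(s+1)(t+1)·C(q_s+s,q_s)·C(t+s,s)·C(q_d+t,q_d)·C(2q_d+t+1,2q_d+1)`. -/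
theorem stmt_8 {n q_d q_s : ℕ} (t s : ℕ) (ht : 1 ≤ t) (hs : 1 ≤ s)
    (At : Fin (n - q_d) → Fin n) (hAt : StrictMono At)
    (As : Finset (Fin (n - q_d))) (hAs : As.card = q_s) :
    Nat.card {B : (Fin (n - q_d) → Fin n) × Finset (Fin (n - q_d)) //
        StrictMono B.1 ∧ B.2.card = q_s ∧
        (Finset.univ.filter (fun i => At i ≠ B.1 i)).card ≤ t ∧
        symmDiff As B.2 ⊆ Finset.univ.filter (fun i => At i ≠ B.1 i) ∧
        (symmDiff As B.2).card ≤ s}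
      ≤ (s + 1) * (t + 1) * Nat.choose (q_s + s) q_s * Nat.choose (t + s) s *
          Nat.choose (q_d + t) q_d * Nat.choose (2 * q_d + t + 1) (2 * q_d + 1) := by
  exact stmt_8_aux (by omega) (by omega) t s ht hs At hAt As hAs
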